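/- Fix a nonzero vector (x₀, y₀) ∈ ℂ², and let D_{[x₀:y₀]} = { [x : y : z] ∈ ℙ(ℂ³) | (x, y) is a nonzero scalar multiple of (x₀, y₀) and |z|² ≤ |x|² + |y|² }. Then D_{[x₀:y₀]} is homeomorphic to the closed unit disk {w : ℂ | ‖w‖ ≤ 1}; an explicit homeomorphism is induced by w ↦ [x₀ : y₀ : w·√(|x₀|² + |y₀|²)]. -/

import Mathlib

/-- The projectivization `ℙ(ℂ³)` carries the quotient topology from `{v : ℂ³ // v ≠ 0}`. -/
noncomputable instance : TopologicalSpace (Projectivization ℂ (ℂ × ℂ × ℂ)) :=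
  instTopologicalSpaceQuotient

/-- The disk `D_{[x₀:y₀]} = {[x : y : z] | (x, y) ∥ (x₀, y₀), |z|² ≤ |x|² + |y|²}` in
`ℙ(ℂ³)`. -/
def projDisk (x₀ y₀ : ℂ) : Set (Projectivization ℂ (ℂ × ℂ × ℂ)) :=
  {P | ∃ (x y z : ℂ) (h : ((x, y, z) : ℂ × ℂ × ℂ) ≠ 0),
    P = Projectivization.mk ℂ ((x, y, z) : ℂ × ℂ × ℂ) h ∧
    (∃ c : ℂ, c ≠ 0 ∧ (x, y) = c • ((x₀, y₀) : ℂ × ℂ)) ∧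
    ‖z‖ ^ 2 ≤ ‖x‖ ^ 2 + ‖y‖ ^ 2}

open Topology Complex

namespace ProjDiskAux

abbrev V3 := ℂ × ℂ × ℂ

noncomputable def qmap : {v : V3 // v ≠ 0} → Projectivization ℂ V3 :=
  fun v => Projectivization.mk ℂ v.1 v.2

lemma qmap_quot : IsQuotientMap qmap := isQuotientMap_quotient_mk'

/-- A quotient map restricted to the preimage of a set with closed preimage is a
quotient map. -/
lemma isQuotientMap_restrictPreimage_of_isClosed {X Y : Type*} [TopologicalSpace X]
    [TopologicalSpace Y] {f : X → Y} (hf : IsQuotientMap f) (D : Set Y)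
    (hD : IsClosed (f ⁻¹' D)) : IsQuotientMap (D.restrictPreimage f) := by
  rw [isQuotientMap_iff_isClosed]
  refine ⟨fun p => ?_, fun s =>
    ⟨fun hs => hs.preimage (hf.continuous.restrictPreimage), fun hs => ?_⟩⟩
  · obtain ⟨x, hx⟩ := hf.surjective p.1
    exact ⟨⟨x, by simp [hx, p.2]⟩, Subtype.ext hx⟩
  · have hC : IsClosed (Subtype.val '' ((D.restrictPreimage f) ⁻¹' s) : Set X) :=
      (hD.isClosedEmbedding_subtypeVal).isClosedMap _ hs
    have key : f ⁻¹' (Subtype.val '' s) = Subtype.val '' ((D.restrictPreimage f) ⁻¹' s) := by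
      ext x
      constructor
      · rintro ⟨p, hp, hpx⟩
        have hxD : f x ∈ D := hpx ▸ p.2
        refine ⟨⟨x, hxD⟩, ?_, rfl⟩
        show D.restrictPreimage f ⟨x, hxD⟩ ∈ s
        have heq : D.restrictPreimage f ⟨x, hxD⟩ = p := Subtype.ext hpx.symm
        rw [heq]; exact hp
      · rintro ⟨v, hv, rfl⟩
        exact ⟨D.restrictPreimage f v, hv, rfl⟩
    have h1 : IsClosed (Subtype.val '' s : Set Y) := by
      rw [← hf.isClosed_preimage, key]; exact hC
    have h2 := h1.preimage (continuous_subtype_val : Continuous (Subtype.val : D → Y))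
    rwa [Subtype.val_injective.preimage_image] at h2

variable (x₀ y₀ : ℂ)

noncomputable def sv : ℝ := Real.sqrt (‖x₀‖ ^ 2 + ‖y₀‖ ^ 2)

noncomputable def Gfun (p : V3) : ℂ :=
  p.2.2 * (sv x₀ y₀ : ℂ) / (p.1 * (starRingEnd ℂ) x₀ + p.2.1 * (starRingEnd ℂ) y₀)

noncomputable def Gbar (P : Projectivization ℂ V3) : ℂ := Gfun x₀ y₀ P.rep

variable {x₀ y₀}

lemma sum_pos (h0 : ((x₀, y₀) : ℂ × ℂ) ≠ 0) :
    0 < ‖x₀‖ ^ 2 + ‖y₀‖ ^ 2 := by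
  rcases Prod.mk_eq_zero.not.1 h0 |> not_and_or.1 with h | h
  · have := norm_pos_iff.mpr h
    positivity
  · have := norm_pos_iff.mpr h
    positivity

lemma sv_pos (h0 : ((x₀, y₀) : ℂ × ℂ) ≠ 0) : 0 < sv x₀ y₀ :=
  Real.sqrt_pos.2 (sum_pos h0)

lemma sv_sq : sv x₀ y₀ ^ 2 = ‖x₀‖ ^ 2 + ‖y₀‖ ^ 2 :=
  Real.sq_sqrt (by positivity)

lemma vne (h0 : ((x₀, y₀) : ℂ × ℂ) ≠ 0) (w : ℂ) : ((x₀, y₀, w) : V3) ≠ 0 := by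
  simp only [ne_eq, Prod.mk_eq_zero, not_and] at h0 ⊢
  tauto

lemma Gfun_smul {a : ℂ} (ha : a ≠ 0) (p : V3) : Gfun x₀ y₀ (a • p) = Gfun x₀ y₀ p := by
  simp only [Gfun, Prod.smul_def, smul_eq_mul]
  rw [show a * p.1 * (starRingEnd ℂ) x₀ + a * p.2.1 * (starRingEnd ℂ) y₀
      = a * (p.1 * (starRingEnd ℂ) x₀ + p.2.1 * (starRingEnd ℂ) y₀) by ring,
    show a * p.2.2 * (sv x₀ y₀ : ℂ) = a * (p.2.2 * (sv x₀ y₀ : ℂ)) by ring,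
    mul_div_mul_left _ _ ha]

lemma Gbar_mk (v : V3) (h : v ≠ 0) :
    Gbar x₀ y₀ (Projectivization.mk ℂ v h) = Gfun x₀ y₀ v := by
  have hrep := Projectivization.mk_rep (Projectivization.mk ℂ v h)
  rw [Projectivization.mk_eq_mk_iff] at hrep
  obtain ⟨a, ha⟩ := hrep
  show Gfun x₀ y₀ (Projectivization.mk ℂ v h).rep = Gfun x₀ y₀ v
  rw [← ha, show (a • v : V3) = (a : ℂ) • v from rfl, Gfun_smul a.ne_zero]

lemma mem_projDisk_mk_iff (v : V3) (h : v ≠ 0) :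
    Projectivization.mk ℂ v h ∈ projDisk x₀ y₀ ↔
      ((∃ c : ℂ, c ≠ 0 ∧ (v.1, v.2.1) = c • ((x₀, y₀) : ℂ × ℂ)) ∧
        ‖v.2.2‖ ^ 2 ≤ ‖v.1‖ ^ 2 + ‖v.2.1‖ ^ 2) := by
  constructor
  · rintro ⟨x', y', z', h', heq, ⟨c, hc, hxy⟩, hz⟩
    rw [Projectivization.mk_eq_mk_iff] at heq
    obtain ⟨a, ha⟩ := heq
    have h1 : v.1 = (a : ℂ) * x' := by rw [← ha]; rfl
    have h2 : v.2.1 = (a : ℂ) * y' := by rw [← ha]; rfl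
    have h3 : v.2.2 = (a : ℂ) * z' := by rw [← ha]; rfl
    have hxy' := hxy
    simp only [Prod.smul_def, smul_eq_mul, Prod.ext_iff] at hxy'
    have hx' : x' = c * x₀ := hxy'.1
    have hy' : y' = c * y₀ := hxy'.2
    constructor
    · refine ⟨(a : ℂ) * c, mul_ne_zero a.ne_zero hc, ?_⟩
      simp only [Prod.smul_def, smul_eq_mul, Prod.ext_iff]
      constructor
      · rw [h1, hx']; ring
      · rw [h2, hy']; ring
    · rw [h1, h2, h3]
      simp only [norm_mul, mul_pow]
      nlinarith [sq_nonneg (‖(a : ℂ)‖), norm_nonneg (a : ℂ)]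
  · rintro ⟨hpar, hz⟩
    exact ⟨v.1, v.2.1, v.2.2, h, rfl, hpar, hz⟩

lemma cond_iff (h0 : ((x₀, y₀) : ℂ × ℂ) ≠ 0) (v : V3) (h : v ≠ 0) :
    ((∃ c : ℂ, c ≠ 0 ∧ (v.1, v.2.1) = c • ((x₀, y₀) : ℂ × ℂ)) ∧
        ‖v.2.2‖ ^ 2 ≤ ‖v.1‖ ^ 2 + ‖v.2.1‖ ^ 2) ↔
      (v.1 * y₀ = v.2.1 * x₀ ∧
        ‖v.2.2‖ ^ 2 ≤ ‖v.1‖ ^ 2 + ‖v.2.1‖ ^ 2) := by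
  obtain ⟨x, y, z⟩ := v
  simp only [ne_eq, Prod.mk_eq_zero, not_and] at h
  constructor
  · rintro ⟨⟨c, hc, hxy⟩, hz⟩
    simp only [Prod.smul_def, smul_eq_mul, Prod.ext_iff] at hxy
    refine ⟨?_, hz⟩
    rw [hxy.1, hxy.2]; ring
  · rintro ⟨hpar, hz⟩
    refine ⟨?_, hz⟩
    have hxy0 : ¬(x = 0 ∧ y = 0) := by
      rintro ⟨rfl, rfl⟩
      have : ‖z‖ ^ 2 ≤ 0 := by simpa using hz
      have hz0 : z = 0 := by
        have := norm_nonneg z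
        have : ‖z‖ = 0 := by nlinarith
        exact norm_eq_zero.1 this
      simp only [ne_eq, Prod.mk_eq_zero, not_and] at h
      exact (by tauto : False)
    simp only [ne_eq, Prod.mk_eq_zero, not_and] at h0
    by_cases hx₀ : x₀ = 0
    · have hy₀ : y₀ ≠ 0 := h0 hx₀
      have hy : y ≠ 0 := by
        intro hy
        apply hxy0
        refine ⟨?_, hy⟩
        have : x * y₀ = 0 := by rw [hpar, hy]; ring
        rcases mul_eq_zero.1 this with h' | h'
        · exact h'
        · exact absurd h' hy₀
      refine ⟨y / y₀, div_ne_zero hy hy₀, ?_⟩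
      simp only [Prod.smul_def, smul_eq_mul, Prod.ext_iff]
      constructor
      · have hx0 : x * y₀ = 0 := by rw [hpar, hx₀]; ring
        rcases mul_eq_zero.1 hx0 with h' | h'
        · rw [h', hx₀]; ring
        · exact absurd h' hy₀
      · rw [div_mul_cancel₀ _ hy₀]
    · have hx : x ≠ 0 := by
        intro hx
        apply hxy0
        refine ⟨hx, ?_⟩
        have : y * x₀ = 0 := by rw [← hpar, hx]; ring
        rcases mul_eq_zero.1 this with h' | h'
        · exact h'
        · exact absurd h' hx₀
      refine ⟨x / x₀, div_ne_zero hx hx₀, ?_⟩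
      simp only [Prod.smul_def, smul_eq_mul, Prod.ext_iff]
      constructor
      · rw [div_mul_cancel₀ _ hx₀]
      · field_simp
        first
        | linear_combination hpar
        | linear_combination -hpar

lemma denom_eq {c x y : ℂ} (hxy : ((x, y) : ℂ × ℂ) = c • ((x₀, y₀) : ℂ × ℂ)) :
    x * (starRingEnd ℂ) x₀ + y * (starRingEnd ℂ) y₀ =
      c * ((‖x₀‖ ^ 2 + ‖y₀‖ ^ 2 : ℝ) : ℂ) := by
  simp only [Prod.smul_def, smul_eq_mul, Prod.ext_iff] at hxy
  rw [hxy.1, hxy.2]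
  have h1 : x₀ * (starRingEnd ℂ) x₀ = ((‖x₀‖ ^ 2 : ℝ) : ℂ) := by
    rw [Complex.mul_conj, Complex.normSq_eq_norm_sq]
  have h2 : y₀ * (starRingEnd ℂ) y₀ = ((‖y₀‖ ^ 2 : ℝ) : ℂ) := by
    rw [Complex.mul_conj, Complex.normSq_eq_norm_sq]
  calc c * x₀ * (starRingEnd ℂ) x₀ + c * y₀ * (starRingEnd ℂ) y₀
      = c * (x₀ * (starRingEnd ℂ) x₀) + c * (y₀ * (starRingEnd ℂ) y₀) := by ring
    _ = c * ((‖x₀‖ ^ 2 + ‖y₀‖ ^ 2 : ℝ) : ℂ) := by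
        rw [h1, h2]; push_cast; ring


lemma Gfun_eq (h0 : ((x₀, y₀) : ℂ × ℂ) ≠ 0) {c : ℂ} (hc : c ≠ 0) {x y z : ℂ}
    (hxy : ((x, y) : ℂ × ℂ) = c • ((x₀, y₀) : ℂ × ℂ)) :
    Gfun x₀ y₀ ((x, y, z) : V3) = z / (c * (sv x₀ y₀ : ℂ)) := by
  have hd := denom_eq hxy
  simp only [Gfun] at *
  rw [hd]
  have hs2 : ((‖x₀‖ ^ 2 + ‖y₀‖ ^ 2 : ℝ) : ℂ) =
      (sv x₀ y₀ : ℂ) * (sv x₀ y₀ : ℂ) := by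
    norm_cast
    rw [← sv_sq]; ring
  rw [hs2]
  have hsne : ((sv x₀ y₀ : ℝ) : ℂ) ≠ 0 := by exact_mod_cast (sv_pos h0).ne'
  field_simp

lemma fwd_mem (h0 : ((x₀, y₀) : ℂ × ℂ) ≠ 0) {w : ℂ} (hw : ‖w‖ ≤ 1) :
    Projectivization.mk ℂ ((x₀, y₀, w * (sv x₀ y₀ : ℂ)) : V3) (vne h0 _) ∈ projDisk x₀ y₀ := by
  rw [mem_projDisk_mk_iff]
  refine ⟨⟨1, one_ne_zero, by simp⟩, ?_⟩
  show ‖(w * (sv x₀ y₀ : ℂ))‖ ^ 2 ≤ ‖x₀‖ ^ 2 + ‖y₀‖ ^ 2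
  have h1 : ‖(w * (sv x₀ y₀ : ℂ))‖ = ‖w‖ * sv x₀ y₀ := by
    rw [norm_mul, Complex.norm_real, Real.norm_eq_abs, _root_.abs_of_nonneg (sv_pos h0).le]
  rw [h1, ← sv_sq]
  have hw' : ‖w‖ ≤ 1 := hw
  have hw2 : ‖w‖ ^ 2 ≤ 1 := by nlinarith [norm_nonneg w]
  calc (‖w‖ * sv x₀ y₀) ^ 2 = ‖w‖ ^ 2 * sv x₀ y₀ ^ 2 := by ring
    _ ≤ 1 * sv x₀ y₀ ^ 2 := by nlinarith [sq_nonneg (sv x₀ y₀)]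
    _ = sv x₀ y₀ ^ 2 := one_mul _

lemma GbarKey (h0 : ((x₀, y₀) : ℂ × ℂ) ≠ 0) {P : Projectivization ℂ V3}
    (hP : P ∈ projDisk x₀ y₀) :
    ‖Gbar x₀ y₀ P‖ ≤ 1 ∧
      Projectivization.mk ℂ ((x₀, y₀, Gbar x₀ y₀ P * (sv x₀ y₀ : ℂ)) : V3) (vne h0 _) = P := by
  obtain ⟨x, y, z, h, rfl, ⟨c, hc, hxy⟩, hz⟩ := hP
  rw [Gbar_mk, Gfun_eq h0 hc hxy]
  have hs := sv_pos h0
  have hsne : ((sv x₀ y₀ : ℝ) : ℂ) ≠ 0 := by exact_mod_cast hs.ne'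
  have hxc : x = c * x₀ ∧ y = c * y₀ := by
    simpa [Prod.smul_def, smul_eq_mul, Prod.ext_iff] using hxy
  have habs : ‖x‖ ^ 2 + ‖y‖ ^ 2 = (‖c‖ * sv x₀ y₀) ^ 2 := by
    rw [hxc.1, hxc.2, norm_mul, norm_mul, mul_pow, mul_pow, mul_pow, ← mul_add, sv_sq]
  have hzle : ‖z‖ ≤ ‖c‖ * sv x₀ y₀ := by
    have h1 : ‖z‖ ^ 2 ≤ (‖c‖ * sv x₀ y₀) ^ 2 := by
      rw [← habs]; exact hz
    exact le_of_pow_le_pow_left₀ two_ne_zero (by positivity) h1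
  constructor
  · rw [norm_div, norm_mul, Complex.norm_real, Real.norm_eq_abs, _root_.abs_of_nonneg hs.le]
    rw [div_le_one (mul_pos (norm_pos_iff.mpr hc) hs)]
    exact hzle
  · refine ((Projectivization.mk_eq_mk_iff' ℂ _ _ h (vne h0 _)).2 ⟨c, ?_⟩).symm
    show c • ((x₀, y₀, z / (c * (sv x₀ y₀ : ℂ)) * (sv x₀ y₀ : ℂ)) : V3) = (x, y, z)
    simp only [Prod.smul_def, smul_eq_mul, Prod.mk.injEq]
    refine ⟨hxc.1.symm, hxc.2.symm, ?_⟩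
    field_simp

lemma fwd_inj (h0 : ((x₀, y₀) : ℂ × ℂ) ≠ 0) {w w' : ℂ}
    (h : Projectivization.mk ℂ ((x₀, y₀, w * (sv x₀ y₀ : ℂ)) : V3) (vne h0 _) =
      Projectivization.mk ℂ ((x₀, y₀, w' * (sv x₀ y₀ : ℂ)) : V3) (vne h0 _)) : w = w' := by
  rw [Projectivization.mk_eq_mk_iff] at h
  obtain ⟨a, ha⟩ := h
  have h1 : x₀ = (a : ℂ) * x₀ := by
    conv_lhs => rw [show x₀ = (((x₀, y₀, w * (sv x₀ y₀ : ℂ)) : V3)).1 from rfl, ← ha]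
    rfl
  have h2 : y₀ = (a : ℂ) * y₀ := by
    conv_lhs => rw [show y₀ = (((x₀, y₀, w * (sv x₀ y₀ : ℂ)) : V3)).2.1 from rfl, ← ha]
    rfl
  have h3 : w * (sv x₀ y₀ : ℂ) = (a : ℂ) * (w' * (sv x₀ y₀ : ℂ)) := by
    conv_lhs =>
      rw [show w * (sv x₀ y₀ : ℂ) = (((x₀, y₀, w * (sv x₀ y₀ : ℂ)) : V3)).2.2 from rfl, ← ha]
    rfl
  have hsne : ((sv x₀ y₀ : ℝ) : ℂ) ≠ 0 := by exact_mod_cast (sv_pos h0).ne'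
  have ha1 : (a : ℂ) = 1 := by
    simp only [ne_eq, Prod.mk_eq_zero, not_and] at h0
    by_cases hx₀ : x₀ = 0
    · have hy₀ : y₀ ≠ 0 := h0 hx₀
      have : y₀ * 1 = y₀ * (a : ℂ) := by rw [mul_one]; rw [mul_comm]; exact h2
      exact (mul_left_cancel₀ hy₀ this).symm
    · have : x₀ * 1 = x₀ * (a : ℂ) := by rw [mul_one]; rw [mul_comm]; exact h1
      exact (mul_left_cancel₀ hx₀ this).symm
  rw [ha1, one_mul] at h3
  exact mul_right_cancel₀ hsne h3

lemma preimage_closed (h0 : ((x₀, y₀) : ℂ × ℂ) ≠ 0) :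
    IsClosed (qmap ⁻¹' (projDisk x₀ y₀)) := by
  have heq : qmap ⁻¹' (projDisk x₀ y₀) = Subtype.val ⁻¹' ({p : V3 | p.1 * y₀ = p.2.1 * x₀} ∩
      {p : V3 | ‖p.2.2‖ ^ 2 ≤ ‖p.1‖ ^ 2 + ‖p.2.1‖ ^ 2}) := by
    ext v
    simp only [Set.mem_preimage, Set.mem_inter_iff, Set.mem_setOf_eq]
    rw [show qmap v = Projectivization.mk ℂ v.1 v.2 from rfl, mem_projDisk_mk_iff,
      cond_iff h0 v.1 v.2]
  rw [heq]
  apply IsClosed.preimage continuous_subtype_val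
  apply IsClosed.inter
  · exact isClosed_eq (by fun_prop) (by fun_prop)
  · apply isClosed_le
    · exact (continuous_norm.comp (continuous_snd.comp continuous_snd)).pow 2
    · exact ((continuous_norm.comp continuous_fst).pow 2).add
        ((continuous_norm.comp (continuous_fst.comp continuous_snd)).pow 2)

end ProjDiskAux

/-- For nonzero `(x₀, y₀)`, the disk `D_{[x₀:y₀]} ⊆ ℙ(ℂ³)` is homeomorphic to the closed
unit disk in `ℂ`, via the map induced by `w ↦ [x₀ : y₀ : w·√(|x₀|² + |y₀|²)]`. -/
theorem projDisk_homeomorph_disk (x₀ y₀ : ℂ) (h0 : ((x₀, y₀) : ℂ × ℂ) ≠ 0) :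
    ∃ e : {w : ℂ // ‖w‖ ≤ 1} ≃ₜ (projDisk x₀ y₀),
      ∀ w : {w : ℂ // ‖w‖ ≤ 1},
        (e w : Projectivization ℂ (ℂ × ℂ × ℂ)) =
          Projectivization.mk ℂ
            ((x₀, y₀, (w : ℂ) *
              (Real.sqrt (‖x₀‖ ^ 2 + ‖y₀‖ ^ 2) : ℝ)) : ℂ × ℂ × ℂ)
            (by
              simp only [ne_eq, Prod.mk_eq_zero, not_and] at h0 ⊢
              tauto) := by
  classical
  have hvne : ∀ w : ℂ, ((x₀, y₀, w) : ℂ × ℂ × ℂ) ≠ 0 := ProjDiskAux.vne h0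
  let fwd : {w : ℂ // ‖w‖ ≤ 1} → projDisk x₀ y₀ := fun w =>
    ⟨Projectivization.mk ℂ ((x₀, y₀, (w : ℂ) * (ProjDiskAux.sv x₀ y₀ : ℂ)) : ℂ × ℂ × ℂ)
      (ProjDiskAux.vne h0 _), ProjDiskAux.fwd_mem h0 w.2⟩
  let bwd : projDisk x₀ y₀ → {w : ℂ // ‖w‖ ≤ 1} := fun p =>
    ⟨ProjDiskAux.Gbar x₀ y₀ p.1, (ProjDiskAux.GbarKey h0 p.2).1⟩
  have hfb : ∀ p, fwd (bwd p) = p := fun p => Subtype.ext (ProjDiskAux.GbarKey h0 p.2).2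
  have hinj : Function.Injective fwd := fun w w' hww =>
    Subtype.ext (ProjDiskAux.fwd_inj h0 (congrArg Subtype.val hww))
  have hbij : Function.Bijective fwd := ⟨hinj, fun p => ⟨bwd p, hfb p⟩⟩
  let E := Equiv.ofBijective fwd hbij
  have hcont_fwd : Continuous fwd := by
    apply Continuous.subtype_mk
    show Continuous fun w : {w : ℂ // ‖w‖ ≤ 1} =>
      ProjDiskAux.qmap ⟨(x₀, y₀, (w : ℂ) * (ProjDiskAux.sv x₀ y₀ : ℂ)), ProjDiskAux.vne h0 _⟩
    exact ProjDiskAux.qmap_quot.continuous.comp (Continuous.subtype_mk (by fun_prop) _)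
  have hq' := ProjDiskAux.isQuotientMap_restrictPreimage_of_isClosed ProjDiskAux.qmap_quot
    (projDisk x₀ y₀) (ProjDiskAux.preimage_closed h0)
  have hcont_G : Continuous fun p : projDisk x₀ y₀ => ProjDiskAux.Gbar x₀ y₀ p.1 := by
    rw [hq'.continuous_iff]
    have hcomp : ((fun p : projDisk x₀ y₀ => ProjDiskAux.Gbar x₀ y₀ p.1) ∘
        ((projDisk x₀ y₀).restrictPreimage ProjDiskAux.qmap)) =
        fun v : (ProjDiskAux.qmap ⁻¹' projDisk x₀ y₀) => ProjDiskAux.Gfun x₀ y₀ v.1.1 :=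
      funext fun v => ProjDiskAux.Gbar_mk v.1.1 v.1.2
    rw [hcomp]
    have hden : ∀ v : (ProjDiskAux.qmap ⁻¹' projDisk x₀ y₀),
        v.1.1.1 * (starRingEnd ℂ) x₀ + v.1.1.2.1 * (starRingEnd ℂ) y₀ ≠ 0 := by
      rintro ⟨⟨v, hv⟩, hmem⟩
      obtain ⟨⟨c, hc, hxy⟩, -⟩ := (ProjDiskAux.mem_projDisk_mk_iff v hv).1 hmem
      show v.1 * (starRingEnd ℂ) x₀ + v.2.1 * (starRingEnd ℂ) y₀ ≠ 0
      rw [ProjDiskAux.denom_eq hxy]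
      exact mul_ne_zero hc (by exact_mod_cast (ProjDiskAux.sum_pos h0).ne')
    unfold ProjDiskAux.Gfun
    exact Continuous.div (by fun_prop) (by fun_prop) hden
  have hcont_bwd : Continuous bwd := Continuous.subtype_mk hcont_G _
  have hsymm : ⇑E.symm = bwd := by
    funext p
    apply hinj
    rw [show fwd (E.symm p) = E (E.symm p) from rfl, Equiv.apply_symm_apply, hfb]
  exact ⟨⟨E, hcont_fwd, by show Continuous ⇑E.symm; rw [hsymm]; exact hcont_bwd⟩, fun w => rfl⟩
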